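/- (Integration of a weak-type inequality) Let (X, μ) be a measure space and F, g : X → [0,∞) measurable with F, g ∈ L^p(μ), p > 1, k ≥ 1 such that for every s > 0: s·μ({F > s}) + s(k-1)·μ({g > s}) ≤ ∫_{{F > s}} g dμ + (k-1)∫_{{g > s}} g dμ. Then ∫ F^p dμ + (k-1)∫ g^p dμ ≤ (p/(p-1)) ∫ (F^{p-1} g + (k-1) g^p) dμ. -/

import Mathlib

open MeasureTheory Set ENNReal

theorem integrate_weak_type
    {X : Type*} [MeasurableSpace X] (μ : Measure X) [SigmaFinite μ]
    (p : ℝ) (hp : 1 < p) (k : ℕ) (hk : 1 ≤ k)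
    (F g : X → ℝ) (hFm : Measurable F) (hgm : Measurable g)
    (hF0 : ∀ x, 0 ≤ F x) (hg0 : ∀ x, 0 ≤ g x)
    (hF : MemLp F (ENNReal.ofReal p) μ) (hg : MemLp g (ENNReal.ofReal p) μ)
    (hweak : ∀ s : ℝ, 0 < s →
      s * (μ {x | s < F x}).toReal + s * ((k : ℝ) - 1) * (μ {x | s < g x}).toReal ≤
        (∫ x in {x | s < F x}, g x ∂μ) + ((k : ℝ) - 1) * ∫ x in {x | s < g x}, g x ∂μ) :
    (∫ x, F x ^ p ∂μ) + ((k : ℝ) - 1) * ∫ x, g x ^ p ∂μ ≤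
      (p / (p - 1)) * ∫ x, (F x ^ (p - 1) * g x + ((k : ℝ) - 1) * g x ^ p) ∂μ := by
  have hp0 : (0:ℝ) < p := lt_trans one_pos hp
  have hp1 : (0:ℝ) < p - 1 := sub_pos.2 hp
  set c : ℝ := (k : ℝ) - 1 with hcdef
  have hc : 0 ≤ c := sub_nonneg.2 (by exact_mod_cast hk)
  set C : ℝ≥0∞ := ENNReal.ofReal c with hCdef
  have hCtop : C ≠ ∞ := ENNReal.ofReal_ne_top
  set ν : Measure X := μ.withDensity (fun x => ENNReal.ofReal (g x)) with hν
  have hSF : ∀ t : ℝ, MeasurableSet {x | t < F x} := fun t =>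
    measurableSet_lt measurable_const hFm
  have hSg : ∀ t : ℝ, MeasurableSet {x | t < g x} := fun t =>
    measurableSet_lt measurable_const hgm
  -- integrability of F^p, g^p
  have hofp : (ENNReal.ofReal p) ≠ 0 := (ENNReal.ofReal_pos.2 hp0).ne'
  have hFp : Integrable (fun x => F x ^ p) μ := by
    have h := hF.integrable_norm_rpow hofp ENNReal.ofReal_ne_top
    refine h.congr (Filter.Eventually.of_forall fun x => ?_)
    simp only []
    rw [Real.norm_of_nonneg (hF0 x), ENNReal.toReal_ofReal hp0.le]
  have hgp : Integrable (fun x => g x ^ p) μ := by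
    have h := hg.integrable_norm_rpow hofp ENNReal.ofReal_ne_top
    refine h.congr (Filter.Eventually.of_forall fun x => ?_)
    simp only []
    rw [Real.norm_of_nonneg (hg0 x), ENNReal.toReal_ofReal hp0.le]
  have AFlt : ∫⁻ x, ENNReal.ofReal (F x ^ p) ∂μ < ∞ := hFp.lintegral_lt_top
  have Bglt : ∫⁻ x, ENNReal.ofReal (g x ^ p) ∂μ < ∞ := hgp.lintegral_lt_top
  -- Chebyshev finiteness
  have hfin : ∀ (f : X → ℝ), Measurable f → (∀ x, 0 ≤ f x) →
      (∫⁻ x, ENNReal.ofReal (f x ^ p) ∂μ < ∞) →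
      ∀ t : ℝ, 0 < t → μ {x | t < f x} ≠ ∞ := by
    intro f hfm hf0 hint t ht
    have hsub : {x | t < f x} ⊆ {x | ENNReal.ofReal (t ^ p) ≤ ENNReal.ofReal (f x ^ p)} :=
      fun x hx => ENNReal.ofReal_le_ofReal
        (Real.rpow_le_rpow ht.le (le_of_lt hx) hp0.le)
    have key : ENNReal.ofReal (t ^ p) * μ {x | t < f x} ≤ ∫⁻ x, ENNReal.ofReal (f x ^ p) ∂μ := by
      refine le_trans (mul_le_mul_right (measure_mono hsub) _)
        (mul_meas_ge_le_lintegral₀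
          ((by fun_prop : Measurable fun x => ENNReal.ofReal (f x ^ p)).aemeasurable)
          (ENNReal.ofReal (t ^ p)))
    intro h
    rw [h, ENNReal.mul_top (by
      simp only [ne_eq, ENNReal.ofReal_eq_zero, not_le]
      positivity)] at key
    exact hint.ne (top_le_iff.mp key)
  -- layer cake identities
  have LF := lintegral_rpow_eq_lintegral_meas_lt_mul μ (Filter.Eventually.of_forall hF0)
    hFm.aemeasurable hp0
  have Lg := lintegral_rpow_eq_lintegral_meas_lt_mul μ (Filter.Eventually.of_forall hg0)
    hgm.aemeasurable hp0
  have MF := lintegral_rpow_eq_lintegral_meas_lt_mul ν (Filter.Eventually.of_forall hF0)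
    hFm.aemeasurable hp1
  have Mg := lintegral_rpow_eq_lintegral_meas_lt_mul ν (Filter.Eventually.of_forall hg0)
    hgm.aemeasurable hp1
  -- withDensity identities
  have wF : ∫⁻ x, ENNReal.ofReal (F x ^ (p - 1)) ∂ν
      = ∫⁻ x, ENNReal.ofReal (F x ^ (p - 1) * g x) ∂μ := by
    rw [hν, lintegral_withDensity_eq_lintegral_mul μ hgm.ennreal_ofReal
      (by fun_prop : Measurable fun x => ENNReal.ofReal (F x ^ (p - 1)))]
    refine lintegral_congr fun x => ?_
    rw [Pi.mul_apply, ← ENNReal.ofReal_mul (hg0 x), mul_comm]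
  have wg : ∫⁻ x, ENNReal.ofReal (g x ^ (p - 1)) ∂ν = ∫⁻ x, ENNReal.ofReal (g x ^ p) ∂μ := by
    rw [hν, lintegral_withDensity_eq_lintegral_mul μ hgm.ennreal_ofReal
      (by fun_prop : Measurable fun x => ENNReal.ofReal (g x ^ (p - 1)))]
    refine lintegral_congr fun x => ?_
    rw [Pi.mul_apply, ← ENNReal.ofReal_mul (hg0 x)]
    congr 1
    have h1 : g x ^ p = g x ^ (1 + (p - 1)) := by norm_num
    rw [h1, Real.rpow_add' (hg0 x) (by norm_num; linarith), Real.rpow_one]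
  -- set integrals equal toReal of ν
  have hνset : ∀ (S : Set X), MeasurableSet S → ∫ x in S, g x ∂μ = (ν S).toReal := by
    intro S hS
    rw [integral_eq_lintegral_of_nonneg_ae (Filter.Eventually.of_forall fun x => hg0 x)
      hgm.aestronglyMeasurable.restrict, hν, withDensity_apply _ hS]
  -- lifted pointwise inequality
  have key : ∀ t : ℝ, 0 < t →
      μ {x | t < F x} * ENNReal.ofReal (t ^ (p - 1))
        + C * (μ {x | t < g x} * ENNReal.ofReal (t ^ (p - 1)))
      ≤ ν {x | t < F x} * ENNReal.ofReal (t ^ (p - 1 - 1))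
        + C * (ν {x | t < g x} * ENNReal.ofReal (t ^ (p - 1 - 1))) := by
    intro t ht
    have h1 := hweak t ht
    rw [hνset _ (hSF t), hνset _ (hSg t)] at h1
    have hμF := hfin F hFm hF0 AFlt t ht
    have hμg := hfin g hgm hg0 Bglt t ht
    have h2 : ENNReal.ofReal t * μ {x | t < F x} + C * (ENNReal.ofReal t * μ {x | t < g x})
        ≤ ν {x | t < F x} + C * ν {x | t < g x} := by
      calc ENNReal.ofReal t * μ {x | t < F x} + C * (ENNReal.ofReal t * μ {x | t < g x})
          = ENNReal.ofReal (t * (μ {x | t < F x}).toReal + t * c * (μ {x | t < g x}).toReal) := by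
            rw [ENNReal.ofReal_add (by positivity) (by positivity),
              ENNReal.ofReal_mul ht.le, ENNReal.ofReal_mul (mul_nonneg ht.le hc),
              ENNReal.ofReal_mul ht.le, ENNReal.ofReal_toReal hμF, ENNReal.ofReal_toReal hμg,
              hCdef]
            ring
        _ ≤ ENNReal.ofReal ((ν {x | t < F x}).toReal + c * (ν {x | t < g x}).toReal) :=
            ENNReal.ofReal_le_ofReal h1
        _ ≤ ν {x | t < F x} + C * ν {x | t < g x} := by
            rw [ENNReal.ofReal_add ENNReal.toReal_nonneg
              (mul_nonneg hc ENNReal.toReal_nonneg), ENNReal.ofReal_mul hc, ← hCdef]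
            gcongr <;> exact ENNReal.ofReal_toReal_le
    have ht1 : ENNReal.ofReal (t ^ (p - 1))
        = ENNReal.ofReal t * ENNReal.ofReal (t ^ (p - 1 - 1)) := by
      rw [← ENNReal.ofReal_mul ht.le]
      congr 1
      have : t ^ (p - 1) = t ^ (1 + (p - 1 - 1)) := by norm_num
      rw [this, Real.rpow_add ht, Real.rpow_one]
    calc μ {x | t < F x} * ENNReal.ofReal (t ^ (p - 1))
          + C * (μ {x | t < g x} * ENNReal.ofReal (t ^ (p - 1)))
        = (ENNReal.ofReal t * μ {x | t < F x} + C * (ENNReal.ofReal t * μ {x | t < g x}))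
            * ENNReal.ofReal (t ^ (p - 1 - 1)) := by rw [ht1]; ring
      _ ≤ (ν {x | t < F x} + C * ν {x | t < g x}) * ENNReal.ofReal (t ^ (p - 1 - 1)) :=
          mul_le_mul_left h2 _
      _ = ν {x | t < F x} * ENNReal.ofReal (t ^ (p - 1 - 1))
          + C * (ν {x | t < g x} * ENNReal.ofReal (t ^ (p - 1 - 1))) := by ring
  -- measurability of tail functions
  have mtail : ∀ (f : X → ℝ) (m : Measure X), Measurable fun t : ℝ => m {x | t < f x} :=
    fun f m => Antitone.measurable fun s t hst =>
      measure_mono fun x hx => lt_of_le_of_lt hst hx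
  have mw1 : Measurable fun t : ℝ => ENNReal.ofReal (t ^ (p - 1)) := by fun_prop
  have mw2 : Measurable fun t : ℝ => ENNReal.ofReal (t ^ (p - 1 - 1)) := by fun_prop
  -- integrate key over Ioi 0
  have main : (∫⁻ t in Ioi (0:ℝ), μ {x | t < F x} * ENNReal.ofReal (t ^ (p - 1)))
        + C * ∫⁻ t in Ioi (0:ℝ), μ {x | t < g x} * ENNReal.ofReal (t ^ (p - 1))
      ≤ (∫⁻ t in Ioi (0:ℝ), ν {x | t < F x} * ENNReal.ofReal (t ^ (p - 1 - 1)))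
        + C * ∫⁻ t in Ioi (0:ℝ), ν {x | t < g x} * ENNReal.ofReal (t ^ (p - 1 - 1)) := by
    rw [← lintegral_const_mul' C _ hCtop, ← lintegral_const_mul' C _ hCtop,
      ← lintegral_add_left (f := fun t => μ {x | t < F x} * ENNReal.ofReal (t ^ (p - 1)))
        ((mtail F μ).mul mw1),
      ← lintegral_add_left (f := fun t => ν {x | t < F x} * ENNReal.ofReal (t ^ (p - 1 - 1)))
        ((mtail F ν).mul mw2)]
    refine lintegral_mono_ae ?_
    filter_upwards [ae_restrict_mem measurableSet_Ioi] with t ht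
    exact key t ht
  -- Hölder finiteness
  have hpq : (p / (p - 1)).HolderConjugate p := by
    refine Real.holderConjugate_iff.2 ⟨(one_lt_div hp1).2 (by linarith), ?_⟩
    rw [inv_div]
    field_simp
    ring
  have hKFlt : ∫⁻ x, ENNReal.ofReal (F x ^ (p - 1) * g x) ∂μ < ∞ := by
    have hHold := ENNReal.lintegral_mul_le_Lp_mul_Lq μ hpq
      ((by fun_prop : Measurable fun x => ENNReal.ofReal (F x ^ (p - 1))).aemeasurable)
      hgm.ennreal_ofReal.aemeasurable
    have e1 : (∫⁻ x, ((fun x => ENNReal.ofReal (F x ^ (p - 1)))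
        * fun x => ENNReal.ofReal (g x)) x ∂μ)
        = ∫⁻ x, ENNReal.ofReal (F x ^ (p - 1) * g x) ∂μ := by
      refine lintegral_congr fun x => ?_
      rw [Pi.mul_apply, ← ENNReal.ofReal_mul (Real.rpow_nonneg (hF0 x) _)]
    have e2 : (∫⁻ x, ENNReal.ofReal (F x ^ (p - 1)) ^ (p / (p - 1)) ∂μ)
        = ∫⁻ x, ENNReal.ofReal (F x ^ p) ∂μ := by
      refine lintegral_congr fun x => ?_
      rw [ENNReal.ofReal_rpow_of_nonneg (Real.rpow_nonneg (hF0 x) _) (by positivity),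
        ← Real.rpow_mul (hF0 x)]
      congr 2
      field_simp
    have e3 : (∫⁻ x, ENNReal.ofReal (g x) ^ p ∂μ) = ∫⁻ x, ENNReal.ofReal (g x ^ p) ∂μ := by
      refine lintegral_congr fun x => ?_
      rw [ENNReal.ofReal_rpow_of_nonneg (hg0 x) hp0.le]
    rw [e1, e2, e3] at hHold
    refine lt_of_le_of_lt hHold (ENNReal.mul_lt_top ?_ ?_)
    · exact ENNReal.rpow_lt_top_of_nonneg (by positivity) AFlt.ne
    · exact ENNReal.rpow_lt_top_of_nonneg (by positivity) Bglt.ne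
  -- combine in ℝ≥0∞
  have h1ne : ENNReal.ofReal (p - 1) ≠ 0 := (ENNReal.ofReal_pos.2 hp1).ne'
  set A := ∫⁻ x, ENNReal.ofReal (F x ^ p) ∂μ with hA
  set B := ∫⁻ x, ENNReal.ofReal (g x ^ p) ∂μ with hB
  set KF := ∫⁻ x, ENNReal.ofReal (F x ^ (p - 1) * g x) ∂μ with hKFd
  set IF := ∫⁻ t in Ioi (0:ℝ), μ {x | t < F x} * ENNReal.ofReal (t ^ (p - 1)) with hIF
  set Ig := ∫⁻ t in Ioi (0:ℝ), μ {x | t < g x} * ENNReal.ofReal (t ^ (p - 1)) with hIg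
  set JF := ∫⁻ t in Ioi (0:ℝ), ν {x | t < F x} * ENNReal.ofReal (t ^ (p - 1 - 1)) with hJF
  set Jg := ∫⁻ t in Ioi (0:ℝ), ν {x | t < g x} * ENNReal.ofReal (t ^ (p - 1 - 1)) with hJg
  have hKF : KF = ENNReal.ofReal (p - 1) * JF := by rw [← wF, MF]
  have hKg : B = ENNReal.ofReal (p - 1) * Jg := by rw [← wg, Mg]
  have hfinal : A + C * B ≤ ENNReal.ofReal p * ((KF + C * B) / ENNReal.ofReal (p - 1)) := by
    have hsum : ENNReal.ofReal (p - 1) * (JF + C * Jg) = KF + C * B := by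
      rw [hKF, hKg]; ring
    have hdiv : JF + C * Jg = (KF + C * B) / ENNReal.ofReal (p - 1) :=
      (ENNReal.eq_div_iff h1ne ENNReal.ofReal_ne_top).2 hsum
    calc A + C * B = ENNReal.ofReal p * (IF + C * Ig) := by rw [LF, Lg]; ring
      _ ≤ ENNReal.ofReal p * (JF + C * Jg) := mul_le_mul_right main _
      _ = ENNReal.ofReal p * ((KF + C * B) / ENNReal.ofReal (p - 1)) := by rw [hdiv]
  -- convert to real integrals
  have hiF : ∫ x, F x ^ p ∂μ = A.toReal :=
    integral_eq_lintegral_of_nonneg_ae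
      (Filter.Eventually.of_forall fun x => Real.rpow_nonneg (hF0 x) p)
      hFp.aestronglyMeasurable
  have hig : ∫ x, g x ^ p ∂μ = B.toReal :=
    integral_eq_lintegral_of_nonneg_ae
      (Filter.Eventually.of_forall fun x => Real.rpow_nonneg (hg0 x) p)
      hgp.aestronglyMeasurable
  have hFg_int : Integrable (fun x => F x ^ (p - 1) * g x) μ := by
    refine ⟨(by fun_prop : Measurable fun x => F x ^ (p - 1) * g x).aestronglyMeasurable, ?_⟩
    rw [hasFiniteIntegral_iff_ofReal (Filter.Eventually.of_forall fun x =>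
      mul_nonneg (Real.rpow_nonneg (hF0 x) _) (hg0 x))]
    exact hKFlt
  have hiK : ∫ x, (F x ^ (p - 1) * g x + c * g x ^ p) ∂μ = KF.toReal + c * B.toReal := by
    rw [integral_add hFg_int (hgp.const_mul c)]
    congr 1
    · exact integral_eq_lintegral_of_nonneg_ae (Filter.Eventually.of_forall fun x =>
        mul_nonneg (Real.rpow_nonneg (hF0 x) _) (hg0 x)) hFg_int.aestronglyMeasurable
    · rw [integral_const_mul, hig]
  rw [hiF, hig, hiK]
  have hRfin : ENNReal.ofReal p * ((KF + C * B) / ENNReal.ofReal (p - 1)) ≠ ∞ := by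
    refine ENNReal.mul_ne_top ENNReal.ofReal_ne_top ?_
    exact (ENNReal.div_lt_top
      (ENNReal.add_ne_top.2 ⟨hKFlt.ne, ENNReal.mul_ne_top hCtop Bglt.ne⟩) h1ne).ne
  have hmono := ENNReal.toReal_mono hRfin hfinal
  rw [ENNReal.toReal_add AFlt.ne (ENNReal.mul_ne_top hCtop Bglt.ne), ENNReal.toReal_mul,
    ENNReal.toReal_mul, ENNReal.toReal_div, ENNReal.toReal_ofReal hc,
    ENNReal.toReal_ofReal hp0.le, ENNReal.toReal_ofReal hp1.le,
    ENNReal.toReal_add hKFlt.ne (ENNReal.mul_ne_top hCtop Bglt.ne), ENNReal.toReal_mul,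
    ENNReal.toReal_ofReal hc] at hmono
  calc A.toReal + c * B.toReal ≤ p * ((KF.toReal + c * B.toReal) / (p - 1)) := hmono
    _ = p / (p - 1) * (KF.toReal + c * B.toReal) := by ring
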